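/- Let n ≥ 2 and let A, B ∈ SL_n(ℤ) be such that every entry of A, A⁻¹, B, and B⁻¹ is bounded in absolute value by a constant c ≥ 1 with n·c ≥ 2. Suppose the homomorphism φ from the free group F₂ on two generators to SL_n(ℤ) sending the generators to A and B is injective (i.e., A and B generate a free subgroup of rank two). Let p ≥ 3 be a prime and let φ_p : F₂ → SL_n(𝔽_p) be the composition of φ with reduction modulo p. Then every nontrivial element w ∈ F₂ with φ_p(w) = 1 has reduced word length at least ⌊log(p−1)/log(n·c)⌋. Equivalently, the girth of the Cayley graph of the subgroup of SL_n(𝔽_p) generated by the reductions A_p, B_p with respect to {A_p^{±1}, B_p^{±1}} is at least ⌊log(p−1)/log(n·c)⌋. -/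

import Mathlib

open Matrix

/-- Entry bound for a product of matrices each of whose entries is bounded by `c`. -/
lemma prod_entry_bound (n : ℕ) (c : ℤ) (hc : 1 ≤ c)
    (L : List (Matrix (Fin n) (Fin n) ℤ))
    (hL : ∀ M ∈ L, ∀ i j, |M i j| ≤ c) :
    ∀ i j, |L.prod i j| ≤ ((n : ℤ) * c) ^ L.length := by
  induction L with
  | nil =>
      intro i j
      simp only [List.prod_nil, List.length_nil, pow_zero]
      by_cases h : i = j <;> simp [Matrix.one_apply, h]
  | cons M L ih =>
      intro i j
      have hM : ∀ i j, |M i j| ≤ c := hL M List.mem_cons_self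
      have hL' : ∀ N ∈ L, ∀ i j, |N i j| ≤ c := fun N hN => hL N (List.mem_cons_of_mem _ hN)
      have ihb := ih hL'
      rw [List.prod_cons, List.length_cons]
      rw [Matrix.mul_apply]
      calc |∑ k, M i k * L.prod k j| ≤ ∑ k, |M i k * L.prod k j| :=
            Finset.abs_sum_le_sum_abs _ _
        _ ≤ ∑ _k : Fin n, c * ((n : ℤ) * c) ^ L.length := by
            apply Finset.sum_le_sum
            intro k _
            rw [abs_mul]
            exact mul_le_mul (hM i k) (ihb k j) (abs_nonneg _) (le_trans zero_le_one hc)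
        _ = (n : ℤ) * c * ((n : ℤ) * c) ^ L.length := by
            rw [Finset.sum_const, Finset.card_univ, Fintype.card_fin]
            push_cast; ring
        _ = ((n : ℤ) * c) ^ (L.length + 1) := by rw [pow_succ]; ring

theorem girth_lower_bound_of_free (n : ℕ) (hn : 2 ≤ n) (c : ℤ) (hc : 1 ≤ c)
    (hnc : 2 ≤ (n : ℤ) * c)
    (A B : Matrix.SpecialLinearGroup (Fin n) ℤ)
    (hAbd : ∀ i j, |(A : Matrix (Fin n) (Fin n) ℤ) i j| ≤ c)
    (hAibd : ∀ i j, |((A⁻¹ : Matrix.SpecialLinearGroup (Fin n) ℤ) :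
      Matrix (Fin n) (Fin n) ℤ) i j| ≤ c)
    (hBbd : ∀ i j, |(B : Matrix (Fin n) (Fin n) ℤ) i j| ≤ c)
    (hBibd : ∀ i j, |((B⁻¹ : Matrix.SpecialLinearGroup (Fin n) ℤ) :
      Matrix (Fin n) (Fin n) ℤ) i j| ≤ c)
    (hfree : Function.Injective (FreeGroup.lift ![A, B]))
    (p : ℕ) (hp : p.Prime) (hp3 : 3 ≤ p)
    (w : FreeGroup (Fin 2)) (hw : w ≠ 1)
    (hker : Matrix.SpecialLinearGroup.map (Int.castRingHom (ZMod p))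
      (FreeGroup.lift ![A, B] w) = 1) :
    ⌊Real.log ((p : ℝ) - 1) / Real.log ((n : ℝ) * (c : ℝ))⌋ ≤ (FreeGroup.norm w : ℤ) := by
  set M := FreeGroup.lift ![A, B] w with hM
  -- coe of a product of SL matrices
  have coe_prod : ∀ (l : List (Matrix.SpecialLinearGroup (Fin n) ℤ)),
      (l.prod).val = (l.map (fun g => g.val)).prod := by
    intro l
    induction l with
    | nil => simp
    | cons x l ih => simp [ih]
  -- entry bound for M
  have key : ∀ i j, |(M : Matrix (Fin n) (Fin n) ℤ) i j|
      ≤ ((n : ℤ) * c) ^ (FreeGroup.norm w) := by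
    have hlift : M = (w.toWord.map fun x =>
        cond x.2 (![A, B] x.1) (![A, B] x.1)⁻¹).prod := by
      rw [hM, ← FreeGroup.lift_mk, FreeGroup.mk_toWord]
    intro i j
    rw [hlift, coe_prod, List.map_map]
    have := prod_entry_bound n c hc
      (w.toWord.map ((fun g : Matrix.SpecialLinearGroup (Fin n) ℤ => g.val) ∘
        fun x => cond x.2 (![A, B] x.1) (![A, B] x.1)⁻¹))
      (by
        intro N hN i' j'
        simp only [List.mem_map, Function.comp] at hN
        obtain ⟨⟨a, b⟩, _, rfl⟩ := hN
        fin_cases a <;> cases b <;>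
          simp only [cond, Matrix.cons_val_zero, Matrix.cons_val_one, Matrix.head_cons] <;>
          first
            | exact hAbd i' j'
            | exact hAibd i' j'
            | exact hBbd i' j'
            | exact hBibd i' j') i j
    rw [List.length_map] at this; rwa [show FreeGroup.norm w = w.toWord.length from rfl]
  -- M ≠ 1
  have hMne : M ≠ 1 := by
    intro h
    exact hw (hfree (by rw [← hM, h, (FreeGroup.lift ![A, B]).map_one]))
  -- find an entry where M differs from 1
  have hMatne : (M : Matrix (Fin n) (Fin n) ℤ) ≠ (1 : Matrix (Fin n) (Fin n) ℤ) := by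
    intro h
    apply hMne
    ext i j
    rw [h]
    rfl
  obtain ⟨i, j, hij⟩ : ∃ i j, (M : Matrix (Fin n) (Fin n) ℤ) i j
      ≠ (1 : Matrix (Fin n) (Fin n) ℤ) i j := by
    by_contra h
    push_neg at h
    exact hMatne (by ext i j; exact h i j)
  -- reduction mod p is trivial, so p divides the difference
  have hdvd : (p : ℤ) ∣ ((M : Matrix (Fin n) (Fin n) ℤ) i j
      - (1 : Matrix (Fin n) (Fin n) ℤ) i j) := by
    have h1 : (((M : Matrix (Fin n) (Fin n) ℤ) i j : ℤ) : ZMod p)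
        = (((1 : Matrix (Fin n) (Fin n) ℤ) i j : ℤ) : ZMod p) := by
      have h2 := congrArg (fun g => ((g : Matrix.SpecialLinearGroup (Fin n) (ZMod p)) :
        Matrix (Fin n) (Fin n) (ZMod p)) i j) hker
      simp only [Matrix.SpecialLinearGroup.map_apply_coe, RingHom.mapMatrix_apply,
        Matrix.map_apply, Int.coe_castRingHom] at h2
      rw [h2]
      by_cases h : i = j <;> simp [Matrix.one_apply, h]
    have := (ZMod.intCast_eq_intCast_iff' _ _ _).mp h1
    exact Int.ModEq.dvd this.symm
  have hdiffne : (M : Matrix (Fin n) (Fin n) ℤ) i j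
      - (1 : Matrix (Fin n) (Fin n) ℤ) i j ≠ 0 := sub_ne_zero.mpr hij
  have hple : (p : ℤ) ≤ |(M : Matrix (Fin n) (Fin n) ℤ) i j
      - (1 : Matrix (Fin n) (Fin n) ℤ) i j| :=
    Int.le_of_dvd (abs_pos.mpr hdiffne) ((dvd_abs _ _).mpr hdvd)
  have hone : |(1 : Matrix (Fin n) (Fin n) ℤ) i j| ≤ 1 := by
    by_cases h : i = j <;> simp [Matrix.one_apply, h]
  have hentry : (p : ℤ) - 1 ≤ |(M : Matrix (Fin n) (Fin n) ℤ) i j| := by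
    have habs := abs_sub ((M : Matrix (Fin n) (Fin n) ℤ) i j)
      ((1 : Matrix (Fin n) (Fin n) ℤ) i j)
    linarith
  -- combine: p - 1 ≤ (n*c)^norm w
  have hmain : (p : ℤ) - 1 ≤ ((n : ℤ) * c) ^ (FreeGroup.norm w) :=
    le_trans hentry (key i j)
  -- pass to reals and take logs
  have hncR : (1 : ℝ) < (n : ℝ) * (c : ℝ) := by
    have : (2 : ℝ) ≤ (n : ℝ) * (c : ℝ) := by exact_mod_cast hnc
    linarith
  have hp1R : (1 : ℝ) ≤ (p : ℝ) - 1 := by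
    have : (3 : ℝ) ≤ (p : ℝ) := by exact_mod_cast hp3
    linarith
  have hmainR : ((p : ℝ) - 1) ≤ ((n : ℝ) * (c : ℝ)) ^ (FreeGroup.norm w) := by
    have := hmain
    push_cast at this ⊢
    exact_mod_cast this
  have hlog : Real.log ((p : ℝ) - 1)
      ≤ (FreeGroup.norm w : ℝ) * Real.log ((n : ℝ) * (c : ℝ)) := by
    calc Real.log ((p : ℝ) - 1)
        ≤ Real.log (((n : ℝ) * (c : ℝ)) ^ (FreeGroup.norm w)) :=
          Real.log_le_log (by linarith) hmainR
      _ = (FreeGroup.norm w : ℝ) * Real.log ((n : ℝ) * (c : ℝ)) := by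
          rw [Real.log_pow]
  have hlogpos : 0 < Real.log ((n : ℝ) * (c : ℝ)) := Real.log_pos hncR
  have hdivle : Real.log ((p : ℝ) - 1) / Real.log ((n : ℝ) * (c : ℝ))
      ≤ (FreeGroup.norm w : ℝ) := (div_le_iff₀ hlogpos).mpr hlog
  have := Int.floor_le (Real.log ((p : ℝ) - 1) / Real.log ((n : ℝ) * (c : ℝ)))
  have : (⌊Real.log ((p : ℝ) - 1) / Real.log ((n : ℝ) * (c : ℝ))⌋ : ℝ)
      ≤ (FreeGroup.norm w : ℝ) := le_trans this hdivle
  exact_mod_cast this
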